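/- arXiv:1710.07398 — 3 statements merged into one kernel-verified Lean document; each statement's English description precedes it below -/
import Mathlib

section
/- Let (R, m) be a commutative Noetherian local ring and let I, J be ideals with J ⊆ I and mI = mJ. Then μ(I) = μ(J) + length_R(I/J), where μ denotes the minimal number of generators. -/
open IsLocalRing CategoryTheory

universe u

noncomputable section

/-- The minimal number of generators of an ideal. -/
def muGen {R : Type u} [CommRing R] (I : Ideal R) : ℕ :=
  sInf {n | ∃ s : Finset R, s.card = n ∧ Ideal.span (s : Set R) = I}

/-- `depth_R(M) ≥ n` : there is a regular sequence on `M` of length `n`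
consisting of elements of the maximal ideal. -/
def depthGE (R : Type u) [CommRing R] [IsLocalRing R]
    (M : Type u) [AddCommGroup M] [Module R M] (n : ℕ) : Prop :=
  ∃ rs : List R, rs.length = n ∧ (∀ r ∈ rs, r ∈ maximalIdeal R) ∧
    RingTheory.Sequence.IsWeaklyRegular M rs

/-- A Noetherian local ring is Cohen-Macaulay if it admits a regular sequence in the
maximal ideal whose length equals the Krull dimension. -/
def IsCMLocalRing (R : Type u) [CommRing R] [IsLocalRing R] : Prop :=
  ∃ rs : List R, (rs.length : WithBot ℕ∞) = ringKrullDim R ∧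
    (∀ r ∈ rs, r ∈ maximalIdeal R) ∧ RingTheory.Sequence.IsWeaklyRegular R rs

/-- A parameter ideal: generated by `dim R` elements, with radical the maximal ideal. -/
def IsParameterIdeal (R : Type u) [CommRing R] [IsLocalRing R] (q : Ideal R) : Prop :=
  ∃ s : Finset R, Ideal.span (s : Set R) = q ∧ (s.card : WithBot ℕ∞) = ringKrullDim R ∧
    q.radical = maximalIdeal R

/-- `I` is `m`-full: `mI : x = I` for some `x ∈ m`. -/
def IsMFull (R : Type u) [CommRing R] [IsLocalRing R] (I : Ideal R) : Prop :=
  ∃ x ∈ maximalIdeal R, (maximalIdeal R * I).colon (Ideal.span {x}) = I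

/-- `I` is weakly `m`-full: `mI : m = I`. -/
def IsWeaklyMFull (R : Type u) [CommRing R] [IsLocalRing R] (I : Ideal R) : Prop :=
  (maximalIdeal R * I).colon (maximalIdeal R) = I

/-- Projective dimension at most `n`, via syzygies. -/
def pdLE (R : Type u) [CommRing R] : ℕ → (M : Type u) → [AddCommGroup M] → [Module R M] → Prop
  | 0, M, _, _ => Module.Projective R M
  | n+1, M, _, _ => ∃ (k : ℕ) (f : (Fin k → R) →ₗ[R] M),
      Function.Surjective f ∧ pdLE R n (LinearMap.ker f)

/-- Projective dimension (strictly) less than `t` (the zero module has `pd = -∞`). -/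
def pdLT (R : Type u) [CommRing R] (t : ℕ) (M : Type u) [AddCommGroup M] [Module R M] : Prop :=
  Subsingleton M ∨ ∃ n, n < t ∧ pdLE R n M

/-- Finite projective dimension. -/
def pdFinite (R : Type u) [CommRing R] (M : Type u) [AddCommGroup M] [Module R M] : Prop :=
  ∃ n, pdLE R n M

/-- Vanishing of `Tor_i^R(M, N)`. -/
abbrev TorZero (R : Type u) [CommRing R] (M N : Type u) [AddCommGroup M] [Module R M]
    [AddCommGroup N] [Module R N] (i : ℕ) : Prop :=
  Subsingleton (((Tor (ModuleCat.{u} R) i).obj (ModuleCat.of R M)).obj (ModuleCat.of R N))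

/-- An ideal is integrally closed if it contains every element of `R` integral over it. -/
def IsIntegrallyClosedIdeal {R : Type u} [CommRing R] (I : Ideal R) : Prop :=
  ∀ x : R, (∃ f : Polynomial R, f.Monic ∧ 0 < f.natDegree ∧
    (∀ i < f.natDegree, f.coeff i ∈ I ^ (f.natDegree - i)) ∧ Polynomial.eval x f = 0) → x ∈ I

/-- Serre's condition `(S_n)`: `depth R_p ≥ min(n, dim R_p)` for all primes `p`. -/
def SerreCondS (R : Type u) [CommRing R] (n : ℕ) : Prop :=
  ∀ (p : Ideal R) [p.IsPrime], ∀ m : ℕ, m ≤ n →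
    (m : WithBot ℕ∞) ≤ ringKrullDim (Localization.AtPrime p) →
    depthGE (Localization.AtPrime p) (Localization.AtPrime p) m

/-- `[I] ∈ Pic R`: `I` is a finitely generated projective module, locally free of rank one. -/
def InPicard (R : Type u) [CommRing R] (I : Ideal R) : Prop :=
  Module.Finite R I ∧ Module.Projective R I ∧
  ∀ (p : Ideal R) [p.IsPrime],
    Nonempty (LocalizedModule p.primeCompl I ≃ₗ[Localization.AtPrime p] Localization.AtPrime p)

/-- The `n`-th symbolic power `p^(n) = p^n R_p ∩ R` of a prime `p`. -/
def symbolicPow {R : Type u} [CommRing R] (p : Ideal R) (hp : p.IsPrime) (n : ℕ) : Ideal R :=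
  letI := hp
  (Ideal.map (algebraMap R (Localization.AtPrime p)) (p ^ n)).comap
    (algebraMap R (Localization.AtPrime p))

/-- The module `Ext_R^i(k, M)` where `k` is the residue field. -/
def ExtResMod (R : Type u) [CommRing R] [IsLocalRing R]
    (i : ℕ) (M : Type u) [AddCommGroup M] [Module R M] : ModuleCat.{u} R :=
  ((Ext R (ModuleCat.{u} R) i).obj (Opposite.op (ModuleCat.of R (ResidueField R)))).obj
    (ModuleCat.of R M)

/-- `ω` is a canonical module of the `d`-dimensional local ring `R`:
`Ext^i(k, ω) = 0` for `i ≠ d` and `Ext^d(k, ω) ≅ k`. -/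
def IsCanonicalModule (R : Type u) [CommRing R] [IsLocalRing R] (d : ℕ)
    (ω : Type u) [AddCommGroup ω] [Module R ω] : Prop :=
  Module.Finite R ω ∧ (∀ i : ℕ, i ≠ d → Subsingleton (ExtResMod R i ω)) ∧
    Nonempty ((ExtResMod R d ω) ≃ₗ[R] ResidueField R)

/-- A maximal Cohen-Macaulay module: finitely generated, admitting a regular sequence
in the maximal ideal of length `dim R`. -/
def IsMCM (R : Type u) [CommRing R] [IsLocalRing R]
    (N : Type u) [AddCommGroup N] [Module R N] : Prop :=
  Module.Finite R N ∧ ∃ rs : List R, (rs.length : WithBot ℕ∞) = ringKrullDim R ∧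
    (∀ r ∈ rs, r ∈ maximalIdeal R) ∧ RingTheory.Sequence.IsRegular N rs

/-- `R` has minimal multiplicity (with infinite residue field): there is a
parameter ideal `q` with `m² = qm`. -/
def HasMinimalMultiplicity (R : Type u) [CommRing R] [IsLocalRing R] : Prop :=
  ∃ q : Ideal R, IsParameterIdeal R q ∧ maximalIdeal R ^ 2 = q * maximalIdeal R

/-- `M` is an `n`-th syzygy of the module `X`. -/
def IsNthSyzygyOf (R : Type u) [CommRing R] :
    ℕ → (X : Type u) → [AddCommGroup X] → [Module R X] →
      (M : Type u) → [AddCommGroup M] → [Module R M] → Prop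
  | 0, X, _, _, M, _, _ => Nonempty (M ≃ₗ[R] X)
  | n+1, X, _, _, M, _, _ => ∃ (a : ℕ) (f : (Fin a → R) →ₗ[R] X),
      Function.Surjective f ∧ IsNthSyzygyOf R n (LinearMap.ker f) M

end


set_option maxHeartbeats 1000000
set_option synthInstance.maxHeartbeats 400000

section aux
variable {R₀ A₀ M₀ : Type*}

/-- If the scalar map is surjective, the submodule lattices agree. -/
def submoduleOrderIsoOfSurjective [CommSemiring R₀] [Semiring A₀] [Algebra R₀ A₀]
    [AddCommMonoid M₀] [Module R₀ M₀] [Module A₀ M₀] [IsScalarTower R₀ A₀ M₀]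
    (h : Function.Surjective (algebraMap R₀ A₀)) : Submodule A₀ M₀ ≃o Submodule R₀ M₀ where
  toFun p := p.restrictScalars R₀
  invFun p :=
    { carrier := p
      add_mem' := fun ha hb => p.add_mem ha hb
      zero_mem' := p.zero_mem
      smul_mem' := fun a x hx => by
        obtain ⟨r, rfl⟩ := h a
        rw [algebraMap_smul]
        exact p.smul_mem r hx }
  left_inv p := by ext x; rfl
  right_inv p := by ext x; rfl
  map_rel_iff' := Iff.rfl

lemma submoduleOrderIsoOfSurjective_symm_restrictScalars [CommSemiring R₀] [Semiring A₀]
    [Algebra R₀ A₀] [AddCommMonoid M₀] [Module R₀ M₀] [Module A₀ M₀] [IsScalarTower R₀ A₀ M₀]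
    (h : Function.Surjective (algebraMap R₀ A₀)) (p : Submodule R₀ M₀) :
    ((submoduleOrderIsoOfSurjective h).symm p).restrictScalars R₀ = p :=
  (submoduleOrderIsoOfSurjective h).apply_symm_apply p

lemma krullDim_submodule_eq_finrank (K V : Type*) [DivisionRing K] [AddCommGroup V] [Module K V]
    [FiniteDimensional K V] :
    Order.krullDim (Submodule K V) = (Module.finrank K V : WithBot ℕ∞) := by
  apply le_antisymm
  · apply iSup_le
    intro p
    have key : ∀ i : Fin (p.length + 1), (i : ℕ) ≤ Module.finrank K (p.toFun i) := by
      intro i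
      induction i using Fin.induction with
      | zero => simp
      | succ i ih =>
        have h1 := Submodule.finrank_lt_finrank_of_lt (p.step i)
        simp only [Fin.val_succ, Fin.coe_castSucc] at *
        omega
    have hlast := key (Fin.last _)
    have hle : p.length ≤ Module.finrank K V :=
      le_trans (by simpa using hlast) (Submodule.finrank_le _)
    exact_mod_cast hle
  · set n := Module.finrank K V with hn
    let b := Module.finBasis K V
    let S : Fin (n + 1) → Submodule K V :=
      fun i => Submodule.span K (b '' {j : Fin n | (j : ℕ) < (i : ℕ)})
    have hstep : ∀ i : Fin n, S i.castSucc < S i.succ := by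
      intro i
      have hle : S i.castSucc ≤ S i.succ := by
        apply Submodule.span_mono
        apply Set.image_mono
        intro j hj
        simp only [Set.mem_setOf_eq, Fin.coe_castSucc, Fin.val_succ] at hj ⊢
        have h1 : (i.castSucc : ℕ) = i := rfl; have h2 : (i.succ : ℕ) = i + 1 := rfl; have hj' : (j : ℕ) < (i.castSucc : ℕ) := hj; show (j : ℕ) < (i.succ : ℕ); omega
      refine lt_of_le_of_ne hle ?_
      intro heq
      have hmem : b i ∈ S i.succ :=
        Submodule.subset_span ⟨i, by show (i : ℕ) < ((i.succ : Fin (n+1)) : ℕ); rw [Fin.val_succ]; omega, rfl⟩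
      have hnot : b i ∉ S i.castSucc := by
        apply b.linearIndependent.notMem_span_image
        exact fun hh => lt_irrefl (i : ℕ) hh
      rw [← heq] at hmem
      exact hnot hmem
    have hlen := Order.LTSeries.length_le_krullDim (⟨n, S, hstep⟩ : LTSeries (Submodule K V))
    simpa using hlen

end aux

section mu
attribute [local instance] Ideal.Quotient.field

variable {R : Type*} [CommRing R] [IsNoetherianRing R] [IsLocalRing R]

lemma muGenAux_surj_res : Function.Surjective (algebraMap R (R ⧸ maximalIdeal R)) := by
  rw [Ideal.Quotient.algebraMap_eq]; exact Ideal.Quotient.mk_surjective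

lemma muGenAux_eq_finrank (K : Ideal R) :
    muGen K = Module.finrank (R ⧸ maximalIdeal R)
      (↥K ⧸ (maximalIdeal R • ⊤ : Submodule R ↥K)) := by
  classical
  have hsurj := muGenAux_surj_res (R := R)
  have hKfg : K.FG := IsNoetherian.noetherian K
  haveI : Module.Finite R ↥K := Module.Finite.iff_fg.mpr hKfg
  haveI : Module.Finite R (↥K ⧸ (maximalIdeal R • ⊤ : Submodule R ↥K)) :=
    Module.Finite.of_surjective (Submodule.mkQ _) (Submodule.mkQ_surjective _)
  haveI : Module.Finite (R ⧸ maximalIdeal R) (↥K ⧸ (maximalIdeal R • ⊤ : Submodule R ↥K)) :=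
    Module.Finite.of_restrictScalars_finite R _ _
  apply le_antisymm
  · -- μ ≤ finrank
    set n := Module.finrank (R ⧸ maximalIdeal R)
      (↥K ⧸ (maximalIdeal R • ⊤ : Submodule R ↥K)) with hn
    let b := Module.finBasis (R ⧸ maximalIdeal R)
      (↥K ⧸ (maximalIdeal R • ⊤ : Submodule R ↥K))
    have hb := fun i => Submodule.mkQ_surjective (maximalIdeal R • ⊤ : Submodule R ↥K) (b i)
    choose y hy using hb
    set s : Finset R := Finset.image (fun i => (y i : R)) Finset.univ with hs
    have hspan : Ideal.span (s : Set R) = K := by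
      apply le_antisymm
      · rw [Ideal.span_le]
        intro x hx
        simp only [hs, Finset.coe_image, Finset.coe_univ, Set.image_univ, Set.mem_range] at hx
        obtain ⟨i, rfl⟩ := hx
        exact (y i).2
      · -- Nakayama
        have hmap : Submodule.map (Submodule.mkQ (maximalIdeal R • ⊤ : Submodule R ↥K))
            (Submodule.span R (Set.range y)) = ⊤ := by
          rw [Submodule.map_span]
          have hcomp : (Submodule.mkQ (maximalIdeal R • ⊤ : Submodule R ↥K)) ∘ y = ⇑b :=
            funext hy
          rw [← Set.range_comp, hcomp, ← Submodule.restrictScalars_span R (R ⧸ maximalIdeal R)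
            hsurj, b.span_eq, Submodule.restrictScalars_top]
        have htop := congrArg
          (Submodule.comap (Submodule.mkQ (maximalIdeal R • ⊤ : Submodule R ↥K))) hmap
        rw [Submodule.comap_map_eq, Submodule.ker_mkQ, Submodule.comap_top] at htop
        have hKsub := congrArg (Submodule.map K.subtype) htop
        rw [Submodule.map_sup, Submodule.map_smul'', Submodule.map_top, Submodule.range_subtype,
          Submodule.map_span, ← Set.range_comp] at hKsub
        have hrange : Set.range (K.subtype ∘ y) = (s : Set R) := by
          ext x
          simp [hs, Function.comp]
        rw [hrange, Ideal.submodule_span_eq] at hKsub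
        apply Submodule.le_of_le_smul_of_le_jacobson_bot hKfg
        · rw [jacobson_eq_maximalIdeal ⊥ bot_ne_top]
        · exact le_of_eq hKsub.symm
    refine le_trans (Nat.sInf_le ⟨s, rfl, hspan⟩) ?_
    exact le_trans Finset.card_image_le (by simp [hn])
  · -- finrank ≤ μ
    have hne : Set.Nonempty {m | ∃ t : Finset R, t.card = m ∧ Ideal.span (t : Set R) = K} := by
      obtain ⟨t, ht⟩ := hKfg
      exact ⟨t.card, t, rfl, by rw [← Ideal.submodule_span_eq]; exact ht⟩
    obtain ⟨s, hscard, hsspan⟩ := Nat.sInf_mem hne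
    let u : {x : R // x ∈ s} → ↥K := fun x => ⟨x.1, by
      rw [← hsspan]; exact Ideal.subset_span x.2⟩
    have hu : Submodule.span R (Set.range u) = ⊤ := by
      apply Submodule.map_injective_of_injective K.injective_subtype
      rw [Submodule.map_span, ← Set.range_comp, Submodule.map_top, Submodule.range_subtype]
      have : Set.range (K.subtype ∘ u) = (s : Set R) := by
        ext x; constructor
        · rintro ⟨i, rfl⟩; exact i.2
        · intro hx; exact ⟨⟨x, hx⟩, rfl⟩
      rw [this, Ideal.submodule_span_eq, hsspan]
    let v : {x : R // x ∈ s} → (↥K ⧸ (maximalIdeal R • ⊤ : Submodule R ↥K)) :=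
      fun x => Submodule.Quotient.mk (u x)
    have hvR : Submodule.span R (Set.range v) = ⊤ := by
      have : Set.range v = (Submodule.mkQ (maximalIdeal R • ⊤ : Submodule R ↥K)) '' Set.range u := by
        rw [← Set.range_comp]; rfl
      rw [this, ← Submodule.map_span, hu, Submodule.map_top, Submodule.range_mkQ]
    have hv : Submodule.span (R ⧸ maximalIdeal R) (Set.range v) = ⊤ := by
      have h2 := Submodule.span_le_restrictScalars R (R ⧸ maximalIdeal R) (Set.range v)
      rw [hvR] at h2
      exact (Submodule.restrictScalars_eq_top_iff _ _ _).mp (top_le_iff.mp h2)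
    calc Module.finrank (R ⧸ maximalIdeal R) (↥K ⧸ (maximalIdeal R • ⊤ : Submodule R ↥K))
        ≤ Fintype.card {x : R // x ∈ s} := finrank_le_of_span_eq_top hv
      _ = s.card := by simp
      _ = muGen K := hscard

end mu

attribute [local instance] Ideal.Quotient.field

/-- if `J ⊆ I` and `mI = mJ`, then `μ(I) = μ(J) + length(I/J)`. -/
theorem stmt1 (R : Type u) [CommRing R] [IsNoetherianRing R] [IsLocalRing R]
    (I J : Ideal R) (hJI : J ≤ I)
    (h : maximalIdeal R * I = maximalIdeal R * J)
    (c : ℕ)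
    (hc : Order.krullDim (Submodule (R ⧸ J) (Ideal.map (Ideal.Quotient.mk J) I))
      = (c : WithBot ℕ∞)) :
    muGen I = muGen J + c := by
  classical
  have hsurjκ : Function.Surjective (algebraMap R (R ⧸ maximalIdeal R)) := muGenAux_surj_res
  have hMJI : maximalIdeal R • (I : Submodule R R) = maximalIdeal R • (J : Submodule R R) := by
    rw [Ideal.smul_eq_mul, Ideal.smul_eq_mul]; exact h
  set T0 : Submodule R ↥I := maximalIdeal R • ⊤ with hT0def
  set KJ : Submodule R ↥I := Submodule.comap I.subtype (J : Submodule R R) with hKJdef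
  have hT0KJ : T0 ≤ KJ := by
    intro x hx
    have hx' : (x : R) ∈ maximalIdeal R • (I : Submodule R R) :=
      (Submodule.mem_smul_top_iff _ _ _).mp hx
    rw [hMJI] at hx'
    rw [hKJdef, Submodule.mem_comap]
    exact Submodule.smul_le_right hx'
  set WR : Submodule R (↥I ⧸ T0) := KJ.map T0.mkQ with hWRdef
  set Wκ : Submodule (R ⧸ maximalIdeal R) (↥I ⧸ T0) :=
    { carrier := WR
      add_mem' := fun ha hb => WR.add_mem ha hb
      zero_mem' := WR.zero_mem
      smul_mem' := fun a x hx => by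
        obtain ⟨r, rfl⟩ := hsurjκ a
        rw [algebraMap_smul]
        exact WR.smul_mem r hx } with hWκdef
  have hWR : Wκ.restrictScalars R = WR := rfl
  -- finiteness
  haveI : Module.Finite R ↥I := Module.Finite.iff_fg.mpr (IsNoetherian.noetherian I)
  haveI : Module.Finite R (↥I ⧸ T0) :=
    Module.Finite.of_surjective T0.mkQ (Submodule.mkQ_surjective _)
  haveI : Module.Finite (R ⧸ maximalIdeal R) (↥I ⧸ T0) :=
    Module.Finite.of_restrictScalars_finite R _ _
  haveI : Module.Finite (R ⧸ maximalIdeal R) ((↥I ⧸ T0) ⧸ Wκ) :=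
    Module.Finite.of_surjective Wκ.mkQ (Submodule.mkQ_surjective _)
  -- the map φ : J → V comparing with W
  set φ : ↥J →ₗ[R] (↥I ⧸ T0) := T0.mkQ ∘ₗ Submodule.inclusion hJI with hφdef
  have hkerφ : LinearMap.ker φ = (maximalIdeal R • ⊤ : Submodule R ↥J) := by
    ext x
    simp only [hφdef, LinearMap.mem_ker, LinearMap.comp_apply, Submodule.mkQ_apply,
      Submodule.Quotient.mk_eq_zero]
    rw [hT0def]
    constructor
    · intro hx
      have hx' := (Submodule.mem_smul_top_iff _ _ _).mp hx
      rw [Submodule.coe_inclusion, hMJI] at hx'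
      exact (Submodule.mem_smul_top_iff _ _ _).mpr hx'
    · intro hx
      have hx' := (Submodule.mem_smul_top_iff _ _ _).mp hx
      rw [← hMJI, ← Submodule.coe_inclusion (h := hJI)] at hx'
      exact (Submodule.mem_smul_top_iff _ _ _).mpr hx'
  have hrangeφ : LinearMap.range φ = WR := by
    rw [hφdef, LinearMap.range_comp, Submodule.range_inclusion]
  -- μ(J) = dim W
  have hmuJ : muGen J = Module.finrank (R ⧸ maximalIdeal R) ↥Wκ := by
    rw [muGenAux_eq_finrank J]
    have e : (↥J ⧸ (maximalIdeal R • ⊤ : Submodule R ↥J)) ≃ₗ[R] ↥Wκ :=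
      ((((Submodule.quotEquivOfEq _ _ hkerφ.symm).trans
        φ.quotKerEquivRange).trans
        (LinearEquiv.ofEq _ _ hrangeφ)).trans
        (LinearEquiv.ofEq _ _ hWR.symm)).trans
        ((Submodule.restrictScalarsEquiv R (R ⧸ maximalIdeal R) (↥I ⧸ T0) Wκ).restrictScalars R)
    exact (e.extendScalarsOfSurjective hsurjκ).finrank_eq
  -- the map ψ : I → R/J comparing with I/J
  set ψ : ↥I →ₗ[R] (R ⧸ J) := (J : Submodule R R).mkQ ∘ₗ I.subtype with hψdef
  have hkerψ : LinearMap.ker ψ = KJ := by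
    rw [hψdef, LinearMap.ker_comp, Submodule.ker_mkQ]
  have hrangeψ : LinearMap.range ψ = (Ideal.map (Ideal.Quotient.mk J) I).restrictScalars R := by
    ext z
    simp only [LinearMap.mem_range, Submodule.restrictScalars_mem]
    constructor
    · rintro ⟨y, rfl⟩
      exact Ideal.mem_map_of_mem _ y.2
    · intro hz
      obtain ⟨x, hxI, rfl⟩ :=
        (Ideal.mem_map_iff_of_surjective _ Ideal.Quotient.mk_surjective).mp hz
      exact ⟨⟨x, hxI⟩, rfl⟩
  -- the equivalence (V ⧸ Wκ) ≃ I/J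
  have E : ((↥I ⧸ T0) ⧸ Wκ) ≃ₗ[R] ↥(Ideal.map (Ideal.Quotient.mk J) I) :=
    (((((Submodule.Quotient.restrictScalarsEquiv R Wκ).symm.trans
      (Submodule.quotEquivOfEq _ _ hWR)).trans
      (Submodule.quotientQuotientEquivQuotient T0 KJ hT0KJ)).trans
      (Submodule.quotEquivOfEq _ _ hkerψ.symm)).trans
      (ψ.quotKerEquivRange.trans (LinearEquiv.ofEq _ _ hrangeψ))).trans
      (((Submodule.restrictScalarsEquiv R (R ⧸ J) (R ⧸ J) (Ideal.map (Ideal.Quotient.mk J) I)).restrictScalars R))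
  -- transfer the krull dimension hypothesis
  have hsurjJ : Function.Surjective (algebraMap R (R ⧸ J)) := by
    rw [Ideal.Quotient.algebraMap_eq]; exact Ideal.Quotient.mk_surjective
  have hc' : Module.finrank (R ⧸ maximalIdeal R) ((↥I ⧸ T0) ⧸ Wκ) = c := by
    have hk := krullDim_submodule_eq_finrank (R ⧸ maximalIdeal R) ((↥I ⧸ T0) ⧸ Wκ)
    have k1 := Order.krullDim_eq_of_orderIso
      (submoduleOrderIsoOfSurjective (M₀ := (↥I ⧸ T0) ⧸ Wκ) hsurjκ)
    have k2 := Order.krullDim_eq_of_orderIso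
      (Submodule.orderIsoMapComap (σ₁₂ := RingHom.id R)
        E)
    have k3 := Order.krullDim_eq_of_orderIso
      (submoduleOrderIsoOfSurjective (M₀ := ↥(Ideal.map (Ideal.Quotient.mk J) I)) hsurjJ)
    have h2 : Order.krullDim
        (Submodule (R ⧸ maximalIdeal R) ((↥I ⧸ T0) ⧸ Wκ)) = (c : WithBot ℕ∞) := by
      rw [k1, k2, ← k3]; exact hc
    have h3 := hk.symm.trans h2
    exact_mod_cast h3
  have hadd := Submodule.finrank_quotient_add_finrank Wκ
  have hmuI : muGen I = Module.finrank (R ⧸ maximalIdeal R) (↥I ⧸ T0) := muGenAux_eq_finrank I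
  omega
end

section
/- Let (R, m) be a Noetherian local ring of positive depth and I an m-primary weakly m-full ideal. If I is principal, then R is a discrete valuation ring. -/
open IsLocalRing CategoryTheory

universe u

/-- if `R` is a local ring of positive depth and `I` is an
`m`-primary weakly `m`-full principal ideal, then `R` is a DVR. -/
theorem stmt9 (R : Type u) [CommRing R] [IsNoetherianRing R] [IsLocalRing R]
    (hdepth : depthGE R R 1)
    (I : Ideal R) (hprim : I.radical = maximalIdeal R) (hwmf : IsWeaklyMFull R I)
    (hprin : I.IsPrincipal) :
    ∃ _ : IsDomain R, IsDiscreteValuationRing R := by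
  classical
  obtain ⟨a, ha⟩ := hprin
  rw [Ideal.submodule_span_eq] at ha
  subst ha
  -- regular element r in m
  obtain ⟨rs, hlen, hmem, hreg⟩ := hdepth
  obtain ⟨r, rfl⟩ := List.length_eq_one_iff.mp hlen
  have hr : IsSMulRegular R r :=
    ((RingTheory.Sequence.isWeaklyRegular_cons_iff R r []).mp hreg).1
  have hrm : r ∈ maximalIdeal R := hmem r (by simp)
  -- m ^ N ≤ (a)
  obtain ⟨N, hN⟩ := Ideal.exists_radical_pow_le_of_fg (Ideal.span {a})
    (IsNoetherian.noetherian _)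
  rw [hprim] at hN
  -- a ∈ m
  have ham : a ∈ maximalIdeal R := by
    rw [← hprim]; exact Ideal.le_radical (Ideal.mem_span_singleton_self a)
  -- a is a nonzerodivisor
  have hA : ∀ t : R, t * a = 0 → t = 0 := by
    intro t ht
    have h1 : r ^ N ∈ Ideal.span {a} := hN (Ideal.pow_mem_pow hrm N)
    obtain ⟨c, hc⟩ := Ideal.mem_span_singleton'.mp h1
    have h2 : r ^ N * t = r ^ N * 0 := by
      rw [← hc, mul_zero]
      calc c * a * t = c * (t * a) := by ring
        _ = 0 := by rw [ht, mul_zero]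
    exact (hr.pow N) h2
  -- minimal j with m^j ≤ (a)
  have hP : ∃ j, maximalIdeal R ^ j ≤ Ideal.span {a} := ⟨N, hN⟩
  set j := Nat.find hP with hj
  have hjspec : maximalIdeal R ^ j ≤ Ideal.span {a} := Nat.find_spec hP
  have hj0 : j ≠ 0 := by
    intro h0
    have : (1 : R) ∈ Ideal.span {a} := by
      have := hjspec
      rw [h0, pow_zero, Ideal.one_eq_top] at this
      exact this Submodule.mem_top
    obtain ⟨c, hc⟩ := Ideal.mem_span_singleton'.mp this
    exact (maximalIdeal.isMaximal R).ne_top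
      (Ideal.eq_top_of_isUnit_mem _ ham (IsUnit.of_mul_eq_one _ (by rw [mul_comm] at hc; exact hc)))
  have hjpred : ¬ maximalIdeal R ^ (j - 1) ≤ Ideal.span {a} :=
    Nat.find_min hP (by omega)
  obtain ⟨z, hz1, hz2⟩ := SetLike.not_le_iff_exists.mp hjpred
  have hzm : ∀ w ∈ maximalIdeal R, z * w ∈ Ideal.span {a} := by
    intro w hw
    apply hjspec
    have : maximalIdeal R ^ j = maximalIdeal R ^ (j - 1) * maximalIdeal R := by
      rw [← pow_succ]; congr 1; omega
    rw [this]
    exact Ideal.mul_mem_mul hz1 hw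
  -- use weak m-fullness to find y with z*y = a (after adjusting by a unit)
  have hznotcolon : z ∉ (maximalIdeal R * Ideal.span {a}).colon (maximalIdeal R) := by
    rw [hwmf]; exact hz2
  have : ∃ y ∈ maximalIdeal R, z * y ∉ maximalIdeal R * Ideal.span {a} := by
    by_contra h
    push_neg at h
    exact hznotcolon (Submodule.mem_colon.mpr (fun p hp => by
      simpa [smul_eq_mul] using h p hp))
  obtain ⟨y, hy, hzy⟩ := this
  obtain ⟨c, hc⟩ := Ideal.mem_span_singleton.mp (hzm y hy)
  have hcunit : IsUnit c := by
    by_contra hcu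
    apply hzy
    rw [hc, mul_comm a c]
    exact Ideal.mul_mem_mul ((IsLocalRing.mem_maximalIdeal c).mpr hcu)
      (Ideal.mem_span_singleton_self a)
  obtain ⟨u, hu⟩ := hcunit
  set t := (↑u⁻¹ : R) * y with htdef
  have htm : t ∈ maximalIdeal R := Ideal.mul_mem_left _ _ hy
  have hzt : z * t = a := by
    have h1 : z * t = (↑u⁻¹ : R) * (z * y) := by rw [htdef]; ring
    rw [h1, hc, ← hu]
    calc (↑u⁻¹ : R) * (a * ↑u) = a * ((↑u⁻¹ : R) * ↑u) := by ring
      _ = a := by rw [Units.inv_mul, mul_one]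
  -- m = (t)
  have hm : maximalIdeal R = Ideal.span {t} := by
    apply le_antisymm
    · intro w hw
      obtain ⟨d, hd⟩ := Ideal.mem_span_singleton.mp (hzm w hw)
      have key : (w - t * d) * a = 0 := by
        calc (w - t * d) * a = w * a - t * (a * d) := by ring
          _ = w * a - t * (z * w) := by rw [← hd]
          _ = w * a - (z * t) * w := by ring
          _ = 0 := by rw [hzt]; ring
      have := hA _ key
      have hwd : w = t * d := by linear_combination this
      exact Ideal.mem_span_singleton.mpr ⟨d, hwd⟩
    · rw [Ideal.span_le, Set.singleton_subset_iff]; exact htm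
  -- t is a nonzerodivisor
  have hT : ∀ s : R, s * t = 0 → s = 0 := by
    intro s hs
    apply hA
    calc s * a = z * (s * t) := by rw [← hzt]; ring
      _ = 0 := by rw [hs, mul_zero]
  have hTpow : ∀ (k : ℕ) (s : R), s * t ^ k = 0 → s = 0 := by
    intro k
    induction k with
    | zero => intro s hs; simpa using hs
    | succ n ih =>
        intro s hs
        refine ih s (hT (s * t ^ n) ?_)
        rw [mul_assoc, ← pow_succ]; exact hs
  -- Krull intersection
  have hbot : (⨅ i : ℕ, maximalIdeal R ^ i) = ⊥ :=
    Ideal.iInf_pow_eq_bot_of_isLocalRing _ (maximalIdeal.isMaximal R).ne_top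
  -- decomposition of nonzero elements
  have hdecomp : ∀ x : R, x ≠ 0 → ∃ (k : ℕ) (v : R), IsUnit v ∧ x = v * t ^ k := by
    intro x hx
    have hex : ∃ n, x ∉ maximalIdeal R ^ n := by
      by_contra h
      push_neg at h
      refine hx ?_
      rw [← Submodule.mem_bot (R := R), ← hbot]
      exact Submodule.mem_iInf _ |>.mpr h
    have hn1 : x ∉ maximalIdeal R ^ (Nat.find hex) := Nat.find_spec hex
    have hn0 : Nat.find hex ≠ 0 := by
      intro h0
      rw [h0, pow_zero, Ideal.one_eq_top] at hn1
      exact hn1 Submodule.mem_top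
    have hn2 : x ∈ maximalIdeal R ^ (Nat.find hex - 1) :=
      of_not_not (Nat.find_min hex (by omega))
    have hn2' : x ∈ Ideal.span {t ^ (Nat.find hex - 1)} := by
      rw [← Ideal.span_singleton_pow, ← hm]; exact hn2
    obtain ⟨v, hv⟩ := Ideal.mem_span_singleton'.mp hn2'
    refine ⟨Nat.find hex - 1, v, ?_, hv.symm⟩
    by_contra hvu
    apply hn1
    have hvm : v ∈ maximalIdeal R := (IsLocalRing.mem_maximalIdeal v).mpr hvu
    have hpow : maximalIdeal R ^ (Nat.find hex) =
        maximalIdeal R * maximalIdeal R ^ (Nat.find hex - 1) := by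
      rw [← pow_succ']
      congr 1
      omega
    rw [hpow]
    have hmem2 : v * t ^ (Nat.find hex - 1) ∈
        maximalIdeal R * maximalIdeal R ^ (Nat.find hex - 1) :=
      Ideal.mul_mem_mul hvm (Ideal.pow_mem_pow htm _)
    rwa [hv] at hmem2
  -- R is a domain
  have hnzd : NoZeroDivisors R := by
    constructor
    intro s x hsx
    by_cases hx : x = 0
    · right; exact hx
    · left
      obtain ⟨k, v, hvu, rfl⟩ := hdecomp x hx
      have hsv : s * v = 0 := by
        refine hTpow k (s * v) ?_
        rw [mul_assoc]; exact hsx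
      obtain ⟨w, hw⟩ := hvu
      calc s = (s * v) * ↑w⁻¹ := by rw [← hw]; rw [mul_assoc]; simp
        _ = 0 := by rw [hsv, zero_mul]
  haveI : IsDomain R := NoZeroDivisors.to_isDomain R
  have hnf : ¬ IsField R := by
    intro hF
    have hmb := IsLocalRing.isField_iff_maximalIdeal_eq.mp hF
    rw [hm] at hmb
    have ht0 : t = 0 := Ideal.span_singleton_eq_bot.mp hmb
    exact one_ne_zero (hT 1 (by rw [ht0, mul_zero]))
  have hprinm : (maximalIdeal R).IsPrincipal := ⟨⟨t, hm⟩⟩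
  have hdvr : IsDiscreteValuationRing R :=
    ((IsDiscreteValuationRing.TFAE R hnf).out 4 0).mp hprinm
  exact ⟨‹IsDomain R›, hdvr⟩
end

section
/- Let R be a Noetherian ring satisfying (S2) and I an integrally closed ideal of positive height with [I] ∈ Pic R. Then I admits a primary decomposition of the form I = ∩_{p ∈ Ass(R/I)} p^{(n(p))}, where each n(p) is a positive integer and p^{(n)} denotes the n-th symbolic power of p. -/
open IsLocalRing CategoryTheory

universe u

/-! ### Auxiliary lemmas for stmt15 -/

noncomputable section Stmt15Aux

open IsLocalization Polynomial

variable {R : Type u} [CommRing R]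

/-- Membership in the image of an ideal in the localization at a prime,
for elements from the base ring. -/
lemma stmt15_algebraMap_mem_map_iff [IsNoetherianRing R] (p : Ideal R) [p.IsPrime]
    (I : Ideal R) (z : R) :
    algebraMap R (Localization.AtPrime p) z ∈
      I.map (algebraMap R (Localization.AtPrime p)) ↔ ∃ u ∉ p, u * z ∈ I := by
  rw [← IsLocalization.mk'_one (M := p.primeCompl) (Localization.AtPrime p) z,
    IsLocalization.mk'_mem_map_algebraMap_iff p.primeCompl]
  constructor
  · rintro ⟨s, hs, h⟩; exact ⟨s, hs, h⟩
  · rintro ⟨u, hu, h⟩; exact ⟨u, hu, h⟩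

/-- Existence of an associated prime containing a colon ideal. -/
lemma stmt15_exists_assoc [IsNoetherianRing R] (I : Ideal R) (x : R) (hx : x ∉ I) :
    ∃ P ∈ associatedPrimes R (R ⧸ I), ∀ u : R, u * x ∈ I → u ∈ P := by
  have hx0 : (Ideal.Quotient.mk I x) ≠ 0 := by
    rw [Ne, Ideal.Quotient.eq_zero_iff_mem]; exact hx
  obtain ⟨P, hP, hle⟩ :=
    exists_le_isAssociatedPrime_of_isNoetherianRing R (Ideal.Quotient.mk I x) hx0
  refine ⟨P, hP, fun u hu => hle ?_⟩
  rw [Submodule.mem_colon_singleton, Submodule.mem_bot]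
  show u • (Ideal.Quotient.mk I x) = 0
  have : u • (Ideal.Quotient.mk I x) = Ideal.Quotient.mk I (u * x) :=
    (Submodule.Quotient.mk_smul I u x).symm
  rw [this, Ideal.Quotient.eq_zero_iff_mem]
  exact hu

/-- The localization of `I` at a prime is generated by a nonzerodivisor,
given `[I] ∈ Pic R`. -/
lemma stmt15_principal (I : Ideal R) (hPic : InPicard R I) (p : Ideal R) [p.IsPrime] :
    ∃ x : Localization.AtPrime p, x ∈ nonZeroDivisors (Localization.AtPrime p) ∧
      I.map (algebraMap R (Localization.AtPrime p)) = Ideal.span {x} := by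
  obtain ⟨-, -, hfree⟩ := hPic
  obtain ⟨e⟩ := hfree p
  set Rp := Localization.AtPrime p with hRpdef
  set S := p.primeCompl with hSdef
  let f : I →ₗ[R] Rp := (Algebra.linearMap R Rp).comp (Submodule.subtype I)
  have hu : ∀ s : S, IsUnit (algebraMap R (Module.End R Rp) s) :=
    IsLocalizedModule.map_units (Algebra.linearMap R Rp)
  let j0 : LocalizedModule S I →ₗ[R] Rp := LocalizedModule.lift S f hu
  let j : LocalizedModule S I →ₗ[Rp] Rp := j0.extendScalarsOfIsLocalization S Rp
  have hjmk : ∀ (i : I) (s : S),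
      j (LocalizedModule.mk i s) = IsLocalization.mk' Rp (i : R) s := by
    intro i s
    rw [IsLocalization.eq_mk'_iff_mul_eq]
    have h1 : (algebraMap R Rp s) • LocalizedModule.mk i s = LocalizedModule.mk i 1 := by
      rw [algebraMap_smul, LocalizedModule.smul'_mk]
      exact LocalizedModule.mk_cancel s i
    have h2 : j (LocalizedModule.mk i 1) = algebraMap R Rp (i : R) := by
      have := LinearMap.congr_fun (LocalizedModule.lift_comp S f hu) i
      exact this
    calc j (LocalizedModule.mk i s) * algebraMap R Rp s
        = (algebraMap R Rp s) • j (LocalizedModule.mk i s) := by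
          rw [smul_eq_mul, mul_comm]
      _ = j ((algebraMap R Rp s) • LocalizedModule.mk i s) := (map_smul j _ _).symm
      _ = algebraMap R Rp (i : R) := by rw [h1, h2]
  have hker : ∀ z, j z = 0 → z = 0 := by
    intro z hz
    induction z using LocalizedModule.induction_on with
    | _ m s =>
      rw [hjmk] at hz
      have h0 : algebraMap R Rp (m : R) = 0 := by
        rw [← IsLocalization.mk'_spec Rp (m : R) s, hz, zero_mul]
      obtain ⟨u, hu0⟩ := (IsLocalization.map_eq_zero_iff S Rp (m : R)).mp h0
      rw [← LocalizedModule.zero_mk (1 : S), LocalizedModule.mk_eq]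
      refine ⟨u, Subtype.ext ?_⟩
      have : (u : R) * (m : R) = 0 := hu0
      simp only [one_smul, smul_zero, SetLike.val_smul, smul_eq_mul,
        ZeroMemClass.coe_zero]
      exact this
  have hmem : ∀ z, j z ∈ I.map (algebraMap R Rp) := by
    intro z
    induction z using LocalizedModule.induction_on with
    | _ m s =>
      rw [hjmk]
      rw [IsLocalization.mk'_mem_map_algebraMap_iff S]
      exact ⟨1, S.one_mem, by simp⟩
  refine ⟨j (e.symm 1), ?_, ?_⟩
  · refine mem_nonZeroDivisors_iff_right.mpr ?_
    intro z hz
    have h1 : e.symm z = z • e.symm 1 := by rw [← map_smul, smul_eq_mul, mul_one]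
    have h2 : j (e.symm z) = 0 := by
      rw [h1, map_smul, smul_eq_mul, hz]
    have := hker _ h2
    simpa using congrArg e this
  · apply le_antisymm
    · intro z hz
      obtain ⟨⟨a, s⟩, hzs⟩ := (IsLocalization.mem_map_algebraMap_iff S Rp).mp hz
      have hz' : z = j (LocalizedModule.mk a s) := by
        rw [hjmk]; exact IsLocalization.eq_mk'_iff_mul_eq.mpr hzs
      have h3 : (LocalizedModule.mk a s : LocalizedModule S I)
          = (e (LocalizedModule.mk a s)) • e.symm 1 := by
        rw [← map_smul, smul_eq_mul, mul_one, LinearEquiv.symm_apply_apply]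
      have h4 : j (LocalizedModule.mk a s) = (e (LocalizedModule.mk a s)) * j (e.symm 1) := by
        conv_lhs => rw [h3]
        rw [map_smul, smul_eq_mul]
      rw [hz', h4]
      exact Ideal.mem_span_singleton.mpr (dvd_mul_left _ _)
    · rw [Ideal.span_le, Set.singleton_subset_iff]
      exact hmem _

/-- Integral closure transfer: a localized integral equation pushes membership
back into the localized ideal. -/
lemma stmt15_integrally_closed_localized (I : Ideal R)
    (hic : IsIntegrallyClosedIdeal I) (p : Ideal R) [p.IsPrime]
    (Y : Localization.AtPrime p) (n : ℕ) (hn : 0 < n)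
    (c : ℕ → Localization.AtPrime p)
    (hc : ∀ i < n, c i ∈ (I.map (algebraMap R (Localization.AtPrime p))) ^ (n - i))
    (hrel : Y ^ n + ∑ i ∈ Finset.range n, c i * Y ^ i = 0) :
    Y ∈ I.map (algebraMap R (Localization.AtPrime p)) := by
  classical
  rcases subsingleton_or_nontrivial R with hR | hR
  · haveI : Subsingleton (Localization.AtPrime p) := by
      refine subsingleton_of_zero_eq_one ?_
      rw [← map_zero (algebraMap R (Localization.AtPrime p)),
        ← map_one (algebraMap R (Localization.AtPrime p))]
      congr 1
      exact Subsingleton.elim _ _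
    rw [Subsingleton.elim Y 0]
    exact Submodule.zero_mem _
  set S := p.primeCompl with hSdef
  set alg := algebraMap R (Localization.AtPrime p) with halgdef
  -- representation of Y
  obtain ⟨r, s, hYmk⟩ := IsLocalization.exists_mk'_eq S Y
  have hrY : alg r = Y * alg (s : R) := by
    rw [← hYmk, IsLocalization.mk'_spec]
  -- representations of the coefficients
  have hrep : ∀ i : ℕ, ∃ (a : R) (t : S), a ∈ I ^ (n - i) ∧ c i * alg (t : R) = alg a := by
    intro i
    by_cases hi : i < n
    · have hci := hc i hi
      rw [← Ideal.map_pow] at hci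
      obtain ⟨⟨a, t⟩, h⟩ :=
        (IsLocalization.mem_map_algebraMap_iff S (Localization.AtPrime p)).mp hci
      exact ⟨(a : R), t, a.2, h⟩
    · obtain ⟨⟨a, t⟩, h⟩ := IsLocalization.surj (M := S) (S := Localization.AtPrime p) (c i)
      refine ⟨a, t, ?_, by simpa [Algebra.smul_def] using h⟩
      have h0 : n - i = 0 := by omega
      rw [h0, pow_zero, Ideal.one_eq_top]
      exact Submodule.mem_top
  choose a t ha hct using hrep
  -- common denominator
  set u0 : R := ∏ j ∈ Finset.range n, (t j : R) with hu0def
  have hu0S : u0 ∈ S := by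
    rw [hu0def]; exact Submonoid.prod_mem S (fun j _ => (t j).2)
  set e : ℕ → R := fun i => a i * ∏ j ∈ (Finset.range n).erase i, (t j : R) with hedef
  have he : ∀ i, e i ∈ I ^ (n - i) := by
    intro i
    simp only [hedef]
    exact Ideal.mul_mem_right _ _ (ha i)
  have hcu : ∀ i ∈ Finset.range n, c i * alg u0 = alg (e i) := by
    intro i hi
    have hsplit : (t i : R) * ∏ j ∈ (Finset.range n).erase i, (t j : R) = u0 := by
      rw [hu0def]; exact Finset.mul_prod_erase (Finset.range n) (fun j => ((t j : R))) hi
    calc c i * alg u0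
        = c i * alg ((t i : R) * ∏ j ∈ (Finset.range n).erase i, (t j : R)) := by
          rw [hsplit]
      _ = (c i * alg (t i : R)) * alg (∏ j ∈ (Finset.range n).erase i, (t j : R)) := by
          rw [map_mul]; ring
      _ = alg (a i) * alg (∏ j ∈ (Finset.range n).erase i, (t j : R)) := by rw [hct]
      _ = alg (e i) := by rw [← map_mul]
  set w : R := u0 * r with hwdef
  set g : ℕ → R := fun i => e i * (s : R) ^ (n - i) * u0 ^ (n - 1 - i) with hgdef
  -- the localized integral relation with cleared denominators
  have key : alg (w ^ n + ∑ i ∈ Finset.range n, g i * w ^ i) = 0 := by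
    have h2 : (Y ^ n + ∑ i ∈ Finset.range n, c i * Y ^ i)
        * (alg (s : R) ^ n * alg u0 ^ n) = 0 := by rw [hrel, zero_mul]
    rw [← h2, map_add, map_pow, map_sum, add_mul, Finset.sum_mul]
    congr 1
    · rw [hwdef, map_mul, hrY]; ring
    · refine Finset.sum_congr rfl ?_
      intro i hi
      have hilt : i < n := Finset.mem_range.mp hi
      obtain ⟨k, hk⟩ : ∃ k, n = k + 1 + i := ⟨n - 1 - i, by omega⟩
      have h3 : n - 1 - i = k := by omega
      have h4 : n - i = k + 1 := by omega
      rw [map_mul, map_pow]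
      simp only [hgdef, hwdef]
      rw [map_mul, map_mul, map_pow, map_pow, ← hcu i hi, map_mul, hrY, h3, h4, hk]
      ring
  obtain ⟨v, hv⟩ := (IsLocalization.map_eq_zero_iff S (Localization.AtPrime p) _).mp key
  -- the integral equation over R
  set W : R := (v : R) * w with hWdef
  set h : ℕ → R := fun i => g i * (v : R) ^ (n - i) with hhdef
  have hhmem : ∀ i < n, h i ∈ I ^ (n - i) := by
    intro i hi
    simp only [hhdef, hgdef]
    exact Ideal.mul_mem_right _ _ (Ideal.mul_mem_right _ _ (Ideal.mul_mem_right _ _ (he i)))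
  have hW : W ^ n + ∑ i ∈ Finset.range n, h i * W ^ i = 0 := by
    have h5 : (v : R) ^ n = (v : R) ^ (n - 1) * (v : R) := by
      rw [← pow_succ]; congr 1; omega
    have hvn : (v : R) ^ n * (w ^ n + ∑ i ∈ Finset.range n, g i * w ^ i) = 0 := by
      rw [h5, mul_assoc, hv, mul_zero]
    rw [← hvn, mul_add, Finset.mul_sum, hWdef, ← mul_pow]
    congr 1
    refine Finset.sum_congr rfl ?_
    intro i hi
    have hilt : i < n := Finset.mem_range.mp hi
    obtain ⟨k, hk⟩ : ∃ k, n = k + i := ⟨n - i, by omega⟩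
    have h4 : n - i = k := by omega
    simp only [hhdef]
    rw [mul_pow, h4, hk]
    ring
  -- build the polynomial and apply integral closedness
  set f : Polynomial R := Polynomial.X ^ n
      + ∑ i ∈ Finset.range n, Polynomial.C (h i) * Polynomial.X ^ i with hfdef
  have htail : (∑ i ∈ Finset.range n, Polynomial.C (h i) * Polynomial.X ^ i).degree
      < (n : WithBot ℕ) := by
    refine lt_of_le_of_lt (Polynomial.degree_sum_le _ _) ?_
    rw [Finset.sup_lt_iff (by exact_mod_cast WithBot.bot_lt_coe n)]
    intro i hi
    refine lt_of_le_of_lt (Polynomial.degree_C_mul_X_pow_le i (h i)) ?_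
    exact_mod_cast Finset.mem_range.mp hi
  have hmonic : f.Monic := Polynomial.monic_X_pow_add htail
  have hdeg : f.natDegree = n := by
    refine Polynomial.natDegree_eq_of_degree_eq_some ?_
    rw [hfdef]
    rw [Polynomial.degree_add_eq_left_of_degree_lt (by rwa [Polynomial.degree_X_pow])]
    exact Polynomial.degree_X_pow n
  have hcoeff : ∀ i < n, f.coeff i = h i := by
    intro i hi
    rw [hfdef, Polynomial.coeff_add, Polynomial.coeff_X_pow,
      if_neg (by omega : ¬ i = n), Polynomial.finset_sum_coeff, zero_add]
    rw [Finset.sum_eq_single i]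
    · simp [Polynomial.coeff_C_mul, Polynomial.coeff_X_pow]
    · intro j _ hji
      rw [Polynomial.coeff_C_mul, Polynomial.coeff_X_pow, if_neg (Ne.symm hji), mul_zero]
    · intro hni
      exact absurd (Finset.mem_range.mpr hi) hni
  have heval : Polynomial.eval W f = 0 := by
    rw [hfdef]
    simp only [Polynomial.eval_add, Polynomial.eval_pow, Polynomial.eval_X,
      Polynomial.eval_finset_sum, Polynomial.eval_mul, Polynomial.eval_C]
    exact hW
  have hWI : W ∈ I := by
    refine hic W ⟨f, hmonic, ?_, ?_, heval⟩
    · rw [hdeg]; exact hn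
    · intro i hi
      rw [hdeg] at hi ⊢
      rw [hcoeff i hi]
      exact hhmem i hi
  -- conclude
  rw [← hYmk, IsLocalization.mk'_mem_map_algebraMap_iff S]
  refine ⟨(v : R) * u0, S.mul_mem v.2 hu0S, ?_⟩
  have hfin : (v : R) * u0 * r = W := by rw [hWdef, hwdef]; ring
  rw [hfin]
  exact hWI

/-- A nonzerodivisor in the maximal ideal of the localization at an
associated prime that is not minimal. -/
lemma stmt15_depth_one (hS2 : SerreCondS R 2) (p : Ideal R) [p.IsPrime]
    (q : Ideal R) [q.IsPrime] (hqp : q < p) :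
    ∃ t ∈ maximalIdeal (Localization.AtPrime p),
      t ∈ nonZeroDivisors (Localization.AtPrime p) := by
  set Rp := Localization.AtPrime p
  have hdisj : Disjoint ((p.primeCompl : Submonoid R) : Set R) (q : Set R) :=
    Set.disjoint_left.mpr fun {s} hs hq => hs (hqp.le hq)
  have hq' : (q.map (algebraMap R Rp)).IsPrime :=
    IsLocalization.isPrime_of_isPrime_disjoint p.primeCompl Rp q ‹q.IsPrime› hdisj
  have hlt : q.map (algebraMap R Rp) < maximalIdeal Rp := by
    refine lt_of_le_of_ne ?_ ?_
    · rw [← Localization.AtPrime.map_eq_maximalIdeal]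
      exact Ideal.map_mono hqp.le
    · intro h
      have h1 : (q.map (algebraMap R Rp)).comap (algebraMap R Rp) = q :=
        IsLocalization.under_map_of_isPrime_disjoint p.primeCompl Rp ‹q.IsPrime› hdisj
      have h2 : (maximalIdeal Rp).comap (algebraMap R Rp) = p :=
        Localization.AtPrime.comap_maximalIdeal
      rw [h] at h1
      exact hqp.ne (h1.symm.trans h2 ▸ rfl)
  have hdim : (1 : WithBot ℕ∞) ≤ ringKrullDim Rp := by
    let Q : PrimeSpectrum Rp := ⟨q.map (algebraMap R Rp), hq'⟩
    let Mx : PrimeSpectrum Rp := ⟨maximalIdeal Rp, (maximalIdeal.isMaximal Rp).isPrime⟩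
    have hQM : Q < Mx := hlt
    let c : LTSeries (PrimeSpectrum Rp) := (RelSeries.singleton _ Q).snoc Mx hQM
    have := Order.LTSeries.length_le_krullDim c
    have hc : c.length = 1 := rfl
    rw [hc] at this
    exact_mod_cast this
  obtain ⟨rs, hlen, hmem, hreg⟩ := hS2 p 1 (by norm_num) hdim
  match rs, hlen with
  | [t], _ =>
    have hsr : IsSMulRegular Rp t :=
      ((RingTheory.Sequence.isWeaklyRegular_cons_iff Rp t []).mp hreg).1
    refine ⟨t, hmem t (by simp), mem_nonZeroDivisors_iff_right.mpr fun z hz => ?_⟩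
    have : t • z = t • 0 := by
      rw [smul_eq_mul, smul_zero, mul_comm]
      exact hz
    exact hsr this

/-- Key lemma: at an associated prime, the localization of `I` is a power of the
maximal ideal. -/
lemma stmt15_key [IsNoetherianRing R] (hS2 : SerreCondS R 2)
    (I : Ideal R) (hht : ∀ p ∈ minimalPrimes R, ¬ I ≤ p)
    (hic : IsIntegrallyClosedIdeal I) (hPic : InPicard R I)
    (p : Ideal R) [p.IsPrime] (hass : p ∈ associatedPrimes R (R ⧸ I)) :
    ∃ n : ℕ, 0 < n ∧ I.map (algebraMap R (Localization.AtPrime p)) =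
      (maximalIdeal (Localization.AtPrime p)) ^ n := by
  classical
  haveI : IsNoetherianRing (Localization.AtPrime p) :=
    IsLocalization.isNoetherianRing p.primeCompl (Localization.AtPrime p) ‹_›
  set alg := algebraMap R (Localization.AtPrime p) with halgdef
  obtain ⟨x, hxnzd, hxspan⟩ := stmt15_principal I hPic p
  -- unpack the associated prime
  obtain ⟨hpprime, y', hy'⟩ := isAssociatedPrime_iff.mp hass
  obtain ⟨y0, rfl⟩ := Ideal.Quotient.mk_surjective y'
  have hann : ∀ u : R, u ∈ p ↔ u * y0 ∈ I := by
    intro u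
    rw [hy', Submodule.mem_colon_singleton, Submodule.mem_bot]
    have h2 : u • (Ideal.Quotient.mk I y0) = Ideal.Quotient.mk I (u * y0) :=
      (Submodule.Quotient.mk_smul I u y0).symm
    rw [h2, Ideal.Quotient.eq_zero_iff_mem]
  have hIp : I ≤ p := by
    intro i hi
    rw [hann]
    exact I.mul_mem_right y0 hi
  set Y : Localization.AtPrime p := alg y0 with hYdef
  -- `m · Y ⊆ I_p` and `Y ∉ I_p`
  have hYmul : ∀ z ∈ maximalIdeal (Localization.AtPrime p), z * Y ∈ I.map alg := by
    intro z hz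
    rw [← Localization.AtPrime.map_eq_maximalIdeal] at hz
    obtain ⟨⟨b, s⟩, hb⟩ := (IsLocalization.mem_map_algebraMap_iff p.primeCompl
      (Localization.AtPrime p)).mp hz
    have hby0 : (b : R) * y0 ∈ I := (hann (b : R)).mp b.2
    have hzY : z * Y = IsLocalization.mk' (Localization.AtPrime p) ((b : R) * y0) s := by
      rw [IsLocalization.eq_mk'_iff_mul_eq]
      calc z * Y * alg (s : R) = (z * alg (s : R)) * Y := by ring
        _ = alg (b : R) * alg y0 := by rw [hb, hYdef]
        _ = alg ((b : R) * y0) := by rw [map_mul]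
    rw [hzY, IsLocalization.mk'_mem_map_algebraMap_iff p.primeCompl]
    exact ⟨1, p.primeCompl.one_mem, by simpa using hby0⟩
  have hYnot : Y ∉ I.map alg := by
    intro hY
    rw [hYdef, halgdef, stmt15_algebraMap_mem_map_iff p I y0] at hY
    obtain ⟨u, hu, huy⟩ := hY
    exact hu ((hann u).mpr huy)
  -- a nonzerodivisor in the maximal ideal
  obtain ⟨q, hq, hqle⟩ := Ideal.exists_minimalPrimes_le (J := p) bot_le
  haveI hqprime : q.IsPrime := hq.1.1
  have hqlt : q < p := lt_of_le_of_ne hqle (fun h => hht q hq (h ▸ hIp))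
  obtain ⟨tt, htm, htnzd⟩ := stmt15_depth_one hS2 p q hqlt
  have hxIp : x ∈ I.map alg := hxspan ▸ Ideal.mem_span_singleton_self x
  have hxm : x ∈ maximalIdeal (Localization.AtPrime p) := by
    have h2 : I.map alg ≤ p.map alg := Ideal.map_mono hIp
    rw [Localization.AtPrime.map_eq_maximalIdeal] at h2
    exact h2 hxIp
  have hxne : x ≠ 0 := by
    intro h0
    have h1 : (1 : Localization.AtPrime p) * x = 0 := by rw [h0, mul_zero]
    exact one_ne_zero (mem_nonZeroDivisors_iff_right.mp hxnzd 1 h1)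
  have hcancel : ∀ z1 z2 : Localization.AtPrime p, z1 * x = z2 * x → z1 = z2 := by
    intro z1 z2 h
    have h1 : (z1 - z2) * x = 0 := by rw [sub_mul, h, sub_self]
    exact sub_eq_zero.mp (mem_nonZeroDivisors_iff_right.mp hxnzd _ h1)
  by_cases hcase : ∃ a ∈ maximalIdeal (Localization.AtPrime p),
      ∃ d : Localization.AtPrime p, IsUnit d ∧ a * Y = d * x
  · -- good case : the maximal ideal is principal and `I_p` is a power of it
    obtain ⟨a0, ha0m, d, hdunit, had⟩ := hcase
    obtain ⟨du, rfl⟩ := hdunit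
    have hma : maximalIdeal (Localization.AtPrime p) = Ideal.span {a0} := by
      refine le_antisymm ?_ ?_
      · intro b hb
        have hbY : b * Y ∈ Ideal.span {x} := hxspan ▸ hYmul b hb
        obtain ⟨cb, hcb⟩ := Ideal.mem_span_singleton.mp hbY
        have hbd : b * (du : Localization.AtPrime p) * x = a0 * cb * x := by
          calc b * (du : Localization.AtPrime p) * x
              = b * ((du : Localization.AtPrime p) * x) := by ring
            _ = b * (a0 * Y) := by rw [← had]
            _ = a0 * (b * Y) := by ring
            _ = a0 * (x * cb) := by rw [hcb]
            _ = a0 * cb * x := by ring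
        have hbd2 : b * (du : Localization.AtPrime p) = a0 * cb := hcancel _ _ hbd
        rw [Ideal.mem_span_singleton]
        refine ⟨cb * ((du⁻¹ : (Localization.AtPrime p)ˣ) : Localization.AtPrime p), ?_⟩
        calc b = b * (du : Localization.AtPrime p)
                  * ((du⁻¹ : (Localization.AtPrime p)ˣ) : Localization.AtPrime p) :=
              (Units.mul_inv_cancel_right b du).symm
          _ = a0 * cb * ((du⁻¹ : (Localization.AtPrime p)ˣ) : Localization.AtPrime p) := by
              rw [hbd2]
          _ = a0 * (cb * ((du⁻¹ : (Localization.AtPrime p)ˣ) : Localization.AtPrime p)) := by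
              ring
      · rw [Ideal.span_le, Set.singleton_subset_iff]
        exact ha0m
    have hnotall : ¬ ∀ k, x ∈ (maximalIdeal (Localization.AtPrime p)) ^ k := by
      intro hall
      have h1 : x ∈ ⨅ k : ℕ, (maximalIdeal (Localization.AtPrime p)) ^ k :=
        (Submodule.mem_iInf _).mpr hall
      rw [Ideal.iInf_pow_eq_bot_of_isLocalRing _
        (Ideal.IsPrime.ne_top (maximalIdeal.isMaximal _).isPrime)] at h1
      exact hxne ((Submodule.mem_bot _).mp h1)
    have H : ∃ k, x ∉ (maximalIdeal (Localization.AtPrime p)) ^ k := not_forall.mp hnotall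
    have hk0 : x ∉ (maximalIdeal (Localization.AtPrime p)) ^ (Nat.find H) := Nat.find_spec H
    have hk00 : Nat.find H ≠ 0 := by
      intro h
      rw [h, pow_zero, Ideal.one_eq_top] at hk0
      exact hk0 Submodule.mem_top
    have hk01 : Nat.find H ≠ 1 := by
      intro h
      rw [h, pow_one] at hk0
      exact hk0 hxm
    have hnn1 : 1 ≤ Nat.find H - 1 := by omega
    have hxin : x ∈ (maximalIdeal (Localization.AtPrime p)) ^ (Nat.find H - 1) := by
      by_contra hnot
      have := Nat.find_min' H hnot
      omega
    have hxnot : x ∉ (maximalIdeal (Localization.AtPrime p)) ^ (Nat.find H - 1 + 1) := by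
      have heq : Nat.find H - 1 + 1 = Nat.find H := by omega
      rw [heq]
      exact hk0
    obtain ⟨nn2, hnneq⟩ : ∃ nn2, Nat.find H - 1 = nn2 := ⟨_, rfl⟩
    rw [hnneq] at hxin hxnot hnn1
    rw [hma, Ideal.span_singleton_pow, Ideal.mem_span_singleton] at hxin
    obtain ⟨rr, hrr⟩ := hxin
    have hrrunit : IsUnit rr := by
      by_contra hrrn
      have hrrm : rr ∈ maximalIdeal (Localization.AtPrime p) := hrrn
      rw [hma, Ideal.mem_span_singleton] at hrrm
      obtain ⟨r2, hr2⟩ := hrrm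
      apply hxnot
      rw [hma, Ideal.span_singleton_pow, Ideal.mem_span_singleton]
      exact ⟨r2, by rw [hrr, hr2, pow_succ]; ring⟩
    refine ⟨nn2, hnn1, ?_⟩
    rw [hxspan, hma, Ideal.span_singleton_pow, hrr,
      Ideal.span_singleton_mul_right_unit hrrunit]
  · -- bad case : contradiction via the determinant trick
    exfalso
    have hc' : ∀ z ∈ maximalIdeal (Localization.AtPrime p),
        ∃ cz ∈ maximalIdeal (Localization.AtPrime p), z * Y = cz * x := by
      intro z hz
      have hzY : z * Y ∈ Ideal.span {x} := hxspan ▸ hYmul z hz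
      obtain ⟨cz, hcz⟩ := Ideal.mem_span_singleton.mp hzY
      refine ⟨cz, ?_, by rw [hcz]; ring⟩
      by_contra hcu
      have hu : IsUnit cz := by
        by_contra hnu
        exact hcu ((IsLocalRing.mem_maximalIdeal cz).mpr hnu)
      exact hcase ⟨z, hz, cz, hu, by rw [hcz]; ring⟩
    have hch : ∀ a : ↥(maximalIdeal (Localization.AtPrime p)),
        ∃ cz ∈ maximalIdeal (Localization.AtPrime p),
          (a : Localization.AtPrime p) * Y = cz * x :=
      fun a => hc' a a.2
    choose cfun hcmem hceq using hch
    have hcfun_add : ∀ a b : ↥(maximalIdeal (Localization.AtPrime p)),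
        cfun (a + b) = cfun a + cfun b := by
      intro a b
      refine hcancel _ _ ?_
      rw [← hceq (a + b), Submodule.coe_add, add_mul, add_mul, hceq a, hceq b]
    have hcfun_smul : ∀ (r : Localization.AtPrime p)
        (a : ↥(maximalIdeal (Localization.AtPrime p))), cfun (r • a) = r * cfun a := by
      intro r a
      refine hcancel _ _ ?_
      rw [← hceq (r • a), SetLike.val_smul, smul_eq_mul, mul_assoc, hceq a, ← mul_assoc]
    set φ : Module.End (Localization.AtPrime p) ↥(maximalIdeal (Localization.AtPrime p)) :=
      { toFun := fun a => ⟨cfun a, hcmem a⟩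
        map_add' := fun a b => Subtype.ext (hcfun_add a b)
        map_smul' := fun r a => Subtype.ext (hcfun_smul r a) } with hφdef
    have hφval : ∀ a, ((φ a : ↥(maximalIdeal (Localization.AtPrime p)))
        : Localization.AtPrime p) = cfun a := fun a => rfl
    haveI : Module.Finite (Localization.AtPrime p) ↥(maximalIdeal (Localization.AtPrime p)) :=
      Module.Finite.iff_fg.mpr (IsNoetherian.noetherian _)
    obtain ⟨P, hPmonic, hPaeval⟩ :=
      LinearMap.exists_monic_and_aeval_eq_zero (Localization.AtPrime p) φ
    set tt' : ↥(maximalIdeal (Localization.AtPrime p)) := ⟨tt, htm⟩ with htt'def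
    rcases Nat.eq_zero_or_pos P.natDegree with hnn0 | hnnpos
    · have hP1 : P = 1 := (Polynomial.Monic.natDegree_eq_zero hPmonic).mp hnn0
      have htt0 : tt' = 0 := by
        calc tt' = (Polynomial.aeval φ P) tt' := by rw [hP1, map_one]; rfl
          _ = 0 := by rw [hPaeval]; rfl
      have htt0' : tt = 0 := by
        have := congrArg
          (fun z : ↥(maximalIdeal (Localization.AtPrime p)) => (z : Localization.AtPrime p)) htt0
        exact this
      exact one_ne_zero (mem_nonZeroDivisors_iff_right.mp htnzd 1 (by rw [one_mul]; exact htt0'))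
    · have hpow : ∀ (i : ℕ) (b : ↥(maximalIdeal (Localization.AtPrime p))),
          x ^ i * (((φ ^ i) b : ↥(maximalIdeal (Localization.AtPrime p)))
            : Localization.AtPrime p) = Y ^ i * (b : Localization.AtPrime p) := by
        intro i
        induction i with
        | zero => intro b; simp
        | succ i ih =>
          intro b
          have h1 : (φ ^ (i + 1)) b = (φ ^ i) (φ b) := by
            rw [pow_succ, Module.End.mul_apply]
          have h3 : x * ((φ b : ↥(maximalIdeal (Localization.AtPrime p)))
              : Localization.AtPrime p) = Y * (b : Localization.AtPrime p) := by
            rw [hφval b]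
            calc x * cfun b = cfun b * x := mul_comm _ _
              _ = (b : Localization.AtPrime p) * Y := (hceq b).symm
              _ = Y * (b : Localization.AtPrime p) := mul_comm _ _
          calc x ^ (i + 1) * (((φ ^ (i + 1)) b : ↥(maximalIdeal (Localization.AtPrime p)))
                : Localization.AtPrime p)
              = x * (x ^ i * (((φ ^ i) (φ b) : ↥(maximalIdeal (Localization.AtPrime p)))
                : Localization.AtPrime p)) := by rw [h1, pow_succ]; ring
            _ = x * (Y ^ i * ((φ b : ↥(maximalIdeal (Localization.AtPrime p)))
                : Localization.AtPrime p)) := by rw [ih (φ b)]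
            _ = Y ^ i * (x * ((φ b : ↥(maximalIdeal (Localization.AtPrime p)))
                : Localization.AtPrime p)) := by ring
            _ = Y ^ i * (Y * (b : Localization.AtPrime p)) := by rw [h3]
            _ = Y ^ (i + 1) * (b : Localization.AtPrime p) := by rw [pow_succ]; ring
      have h6 : (Polynomial.aeval φ P) tt' = 0 := by rw [hPaeval]; rfl
      rw [Polynomial.aeval_eq_sum_range] at h6
      have h7 : ∑ i ∈ Finset.range (P.natDegree + 1), P.coeff i • ((φ ^ i) tt')
          = (0 : ↥(maximalIdeal (Localization.AtPrime p))) := by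
        rw [← h6]
        rw [LinearMap.sum_apply]
        refine Finset.sum_congr rfl ?_
        intro i _
        rw [LinearMap.smul_apply]
      have h8 : ∑ i ∈ Finset.range (P.natDegree + 1),
          P.coeff i * (((φ ^ i) tt' : ↥(maximalIdeal (Localization.AtPrime p)))
            : Localization.AtPrime p) = 0 := by
        have h7c := congrArg ((maximalIdeal (Localization.AtPrime p)).subtype) h7
        simpa [map_sum, smul_eq_mul] using h7c
      have h9 : ∑ i ∈ Finset.range (P.natDegree + 1),
          P.coeff i * x ^ (P.natDegree - i) * Y ^ i * tt = 0 := by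
        have hterm : ∀ i ∈ Finset.range (P.natDegree + 1),
            P.coeff i * x ^ (P.natDegree - i) * Y ^ i * tt
              = x ^ P.natDegree * (P.coeff i
                * (((φ ^ i) tt' : ↥(maximalIdeal (Localization.AtPrime p)))
                  : Localization.AtPrime p)) := by
          intro i hi
          have hile : i ≤ P.natDegree := Nat.lt_succ_iff.mp (Finset.mem_range.mp hi)
          obtain ⟨k, hk⟩ : ∃ k, P.natDegree = k + i := ⟨P.natDegree - i, by omega⟩
          have h4 : P.natDegree - i = k := by omega
          have h5 := hpow i tt'
          have h5' : (tt' : Localization.AtPrime p) = tt := rfl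
          rw [h5'] at h5
          rw [h4, hk]
          calc P.coeff i * x ^ k * Y ^ i * tt = P.coeff i * x ^ k * (Y ^ i * tt) := by ring
            _ = P.coeff i * x ^ k * (x ^ i
                * (((φ ^ i) tt' : ↥(maximalIdeal (Localization.AtPrime p)))
                  : Localization.AtPrime p)) := by rw [← h5]
            _ = x ^ (k + i) * (P.coeff i
                * (((φ ^ i) tt' : ↥(maximalIdeal (Localization.AtPrime p)))
                  : Localization.AtPrime p)) := by rw [pow_add]; ring
        rw [Finset.sum_congr rfl hterm, ← Finset.mul_sum, h8, mul_zero]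
      rw [Finset.sum_range_succ] at h9
      have hlast : P.coeff P.natDegree * x ^ (P.natDegree - P.natDegree) * Y ^ P.natDegree * tt
          = Y ^ P.natDegree * tt := by
        rw [Nat.sub_self, pow_zero, Polynomial.Monic.coeff_natDegree hPmonic]; ring
      rw [hlast] at h9
      have hB : (Y ^ P.natDegree + ∑ i ∈ Finset.range P.natDegree,
          P.coeff i * x ^ (P.natDegree - i) * Y ^ i) * tt = 0 := by
        rw [add_mul, Finset.sum_mul, add_comm]
        exact h9
      have hB0 := mem_nonZeroDivisors_iff_right.mp htnzd _ hB
      have hYin : Y ∈ I.map alg := by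
        refine stmt15_integrally_closed_localized I hic p Y P.natDegree hnnpos
          (fun i => P.coeff i * x ^ (P.natDegree - i)) ?_ ?_
        · intro i _
          have hxpow : x ^ (P.natDegree - i) ∈ (I.map alg) ^ (P.natDegree - i) :=
            Ideal.pow_mem_pow hxIp _
          exact Ideal.mul_mem_left _ _ hxpow
        · exact hB0
      exact hYnot hYin

end Stmt15Aux

/-- over an `(S_2)` Noetherian ring, an integrally closed ideal of
positive height with `[I] ∈ Pic R` has a primary decomposition by symbolic powers
of its associated primes. -/
theorem stmt15 (R : Type u) [CommRing R] [IsNoetherianRing R]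
    (hS2 : SerreCondS R 2)
    (I : Ideal R) (hht : ∀ p ∈ minimalPrimes R, ¬ I ≤ p)
    (hic : IsIntegrallyClosedIdeal I)
    (hPic : InPicard R I) :
    ∃ n : Ideal R → ℕ, (∀ p ∈ associatedPrimes R (R ⧸ I), 0 < n p) ∧
      I = sInf { J : Ideal R | ∃ (p : Ideal R) (hp : p.IsPrime),
        p ∈ associatedPrimes R (R ⧸ I) ∧ J = symbolicPow p hp (n p) } := by
  classical
  set n : Ideal R → ℕ := fun p =>
    if h : p ∈ associatedPrimes R (R ⧸ I) then
      (@stmt15_key R _ _ hS2 I hht hic hPic p h.1 h).choose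
    else 1 with hn_def
  have hkey : ∀ p (h : p ∈ associatedPrimes R (R ⧸ I)),
      0 < n p ∧ I.map (algebraMap R (@Localization.AtPrime R _ p h.1)) =
        (maximalIdeal (@Localization.AtPrime R _ p h.1)) ^ (n p) := by
    intro p h
    have := (@stmt15_key R _ _ hS2 I hht hic hPic p h.1 h).choose_spec
    rw [hn_def]
    simpa [dif_pos h] using this
  have hsymb : ∀ p (h : p ∈ associatedPrimes R (R ⧸ I)),
      symbolicPow p h.1 (n p) =
        (I.map (algebraMap R (@Localization.AtPrime R _ p h.1))).comap
          (algebraMap R (@Localization.AtPrime R _ p h.1)) := by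
    intro p h
    letI := h.1
    have hmap : Ideal.map (algebraMap R (Localization.AtPrime p)) (p ^ (n p)) =
        I.map (algebraMap R (Localization.AtPrime p)) := by
      rw [Ideal.map_pow, Localization.AtPrime.map_eq_maximalIdeal, (hkey p h).2]
    rw [symbolicPow, hmap]
  refine ⟨n, fun p hp => (hkey p hp).1, le_antisymm ?_ ?_⟩
  · refine le_sInf ?_
    rintro J ⟨p, hp, hass, rfl⟩
    letI := hp
    have : symbolicPow p hp (n p) = symbolicPow p hass.1 (n p) := rfl
    rw [this, hsymb p hass]
    exact Ideal.le_comap_map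
  · intro x hx
    by_contra hxI
    obtain ⟨P, hP, hcol⟩ := stmt15_exists_assoc I x hxI
    letI := hP.1
    have hxJ : x ∈ symbolicPow P hP.1 (n P) := by
      rw [Submodule.mem_sInf] at hx
      exact hx _ ⟨P, hP.1, hP, rfl⟩
    rw [hsymb P hP] at hxJ
    rw [Ideal.mem_comap, stmt15_algebraMap_mem_map_iff P I x] at hxJ
    obtain ⟨u, hu, huxI⟩ := hxJ
    exact hu (hcol u huxI)
end
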